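/- Let k be a field and V a finite-dimensional k-vector space. Regard V[t] := k[t] ⊗_k V as a module over the polynomial ring k[t], and let ε₀ : V[t] → V be the k-linear evaluation map sending f(t) ⊗ v to f(0)·v. Let M be a k[t]-submodule of V[t] such that the quotient V[t]/M is torsion-free over k[t]. Then M is a free k[t]-module of finite rank, and dim_k ε₀(M) equals the rank of M, which in turn equals dim_{k(t)} of the k(t)-span of the image of M in k(t) ⊗_k V. -/

import Mathlib

open scoped TensorProduct

/-- Evaluation at `0` of polynomial coefficients: the `k`-linear map
`k[t] ⊗[k] V → V` sending `f ⊗ v` to `f(0) • v`. -/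
noncomputable def evalZeroMap (k V : Type*) [Field k] [AddCommGroup V] [Module k V] :
    Polynomial k ⊗[k] V →ₗ[k] V :=
  TensorProduct.lift ((LinearMap.lsmul k V).comp (Polynomial.lcoeff k 0))

/-- The canonical `k`-linear map `k[t] ⊗[k] V → k(t) ⊗[k] V` induced by the inclusion
`k[t] → k(t)`. -/
noncomputable def polyToRatFuncMap (k V : Type*) [Field k] [AddCommGroup V] [Module k V] :
    Polynomial k ⊗[k] V →ₗ[k] RatFunc k ⊗[k] V :=
  LinearMap.rTensor V
    ((Algebra.linearMap (Polynomial k) (RatFunc k)).restrictScalars k)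

section Aux

variable {k V : Type*} [Field k] [AddCommGroup V] [Module k V]

lemma evalZeroMap_tmul (p : Polynomial k) (v : V) :
    evalZeroMap k V (p ⊗ₜ v) = p.coeff 0 • v := by
  simp [evalZeroMap]

lemma evalZeroMap_smul (p : Polynomial k) (x : Polynomial k ⊗[k] V) :
    evalZeroMap k V (p • x) = p.coeff 0 • evalZeroMap k V x := by
  induction x using TensorProduct.induction_on with
  | zero => simp
  | tmul q v =>
      rw [TensorProduct.smul_tmul', smul_eq_mul, evalZeroMap_tmul, evalZeroMap_tmul,
        Polynomial.mul_coeff_zero, mul_smul]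
  | add x y hx hy => simp [smul_add, hx, hy]

lemma polyToRatFuncMap_tmul (p : Polynomial k) (v : V) :
    polyToRatFuncMap k V (p ⊗ₜ v) = (algebraMap (Polynomial k) (RatFunc k) p) ⊗ₜ v := rfl

lemma polyToRatFuncMap_smul (p : Polynomial k) (x : Polynomial k ⊗[k] V) :
    polyToRatFuncMap k V (p • x)
      = (algebraMap (Polynomial k) (RatFunc k) p) • polyToRatFuncMap k V x := by
  induction x using TensorProduct.induction_on with
  | zero => rw [smul_zero, map_zero, smul_zero]
  | tmul q v =>
      rw [TensorProduct.smul_tmul', smul_eq_mul, polyToRatFuncMap_tmul, polyToRatFuncMap_tmul,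
        map_mul, TensorProduct.smul_tmul', smul_eq_mul]
  | add x y hx hy => rw [smul_add, map_add, hx, hy, map_add, smul_add]

lemma polyToRatFuncMap_injective [FiniteDimensional k V] :
    Function.Injective (polyToRatFuncMap k V) :=
  Module.Flat.rTensor_preserves_injective_linearMap _
    (IsFractionRing.injective (Polynomial k) (RatFunc k))

end Aux

set_option maxHeartbeats 1000000 in
/-- Specialisation lemma: a `k[t]`-submodule `M` of `k[t] ⊗[k] V` with torsion-free
quotient is free of finite rank, the dimension of its specialisation at `t = 0` equals its
rank, and its rank equals the dimension of its `k(t)`-span in `k(t) ⊗[k] V`. -/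
theorem free_and_finrank_specialization
    (k V : Type*) [Field k] [AddCommGroup V] [Module k V] [FiniteDimensional k V]
    (M : Submodule (Polynomial k) (Polynomial k ⊗[k] V))
    (htf : ∀ (f : Polynomial k) (x : (Polynomial k ⊗[k] V) ⧸ M), f • x = 0 → f = 0 ∨ x = 0) :
    Module.Free (Polynomial k) M ∧ Module.Finite (Polynomial k) M ∧
    Module.finrank k (Submodule.map (evalZeroMap k V) (M.restrictScalars k)) =
      Module.finrank (Polynomial k) M ∧
    Module.finrank (Polynomial k) M =
      Module.finrank (RatFunc k)
        (Submodule.span (RatFunc k) (polyToRatFuncMap k V '' (M : Set (Polynomial k ⊗[k] V)))) := by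
  classical
  let bV : Module.Basis (Fin (Module.finrank k V)) k V := Module.finBasis k V
  let B : Module.Basis (Fin (Module.finrank k V)) (Polynomial k) ((Polynomial k) ⊗[k] V) := Algebra.TensorProduct.basis (Polynomial k) bV
  obtain ⟨r, b⟩ := Submodule.basisOfPid B M
  have hrank : Module.finrank (Polynomial k) M = r := by
    rw [Module.finrank_eq_card_basis b, Fintype.card_fin]
  -- kernel of evalZeroMap is divisible by X
  have hker : ∀ x : (Polynomial k) ⊗[k] V, evalZeroMap k V x = 0 → ∃ y, x = (Polynomial.X : (Polynomial k)) • y := by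
    intro x hx
    have hxr : x = ∑ i, B.repr x i • B i := (B.sum_repr x).symm
    have heval : evalZeroMap k V x = ∑ i, (B.repr x i).coeff 0 • bV i := by
      conv_lhs => rw [hxr]
      rw [map_sum]
      refine Finset.sum_congr rfl fun i _ => ?_
      rw [show B i = (1 : (Polynomial k)) ⊗ₜ bV i from Algebra.TensorProduct.basis_apply bV i,
        evalZeroMap_smul, evalZeroMap_tmul]
      simp
    rw [hx] at heval
    have hc : ∀ i, (B.repr x i).coeff 0 = 0 := by
      have := (Fintype.linearIndependent_iff.mp bV.linearIndependent)
        (fun i => (B.repr x i).coeff 0) heval.symm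
      exact this
    have hdvd : ∀ i, ∃ g : (Polynomial k), B.repr x i = Polynomial.X * g := by
      intro i
      obtain ⟨g, hg⟩ := Polynomial.X_dvd_iff.mpr (hc i)
      exact ⟨g, hg⟩
    choose g hg using hdvd
    refine ⟨∑ i, g i • B i, ?_⟩
    rw [Finset.smul_sum]
    conv_lhs => rw [hxr]
    refine Finset.sum_congr rfl fun i _ => ?_
    rw [hg i, smul_smul]
  -- evaluation of basis vectors
  let e : Fin r → V := fun i => evalZeroMap k V (b i : (Polynomial k) ⊗[k] V)
  have hindep : LinearIndependent k e := by
    rw [Fintype.linearIndependent_iff]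
    intro c hc
    obtain ⟨x, hxdef⟩ : ∃ x : M, x = ∑ i, (Polynomial.C (c i) : (Polynomial k)) • b i := ⟨_, rfl⟩
    have hx0 : evalZeroMap k V (x : (Polynomial k) ⊗[k] V) = 0 := by
      have : (x : (Polynomial k) ⊗[k] V) = ∑ i, (Polynomial.C (c i) : (Polynomial k)) • (b i : (Polynomial k) ⊗[k] V) := by
        simp [hxdef]
      rw [this, map_sum]
      have : ∀ i ∈ Finset.univ, evalZeroMap k V ((Polynomial.C (c i) : (Polynomial k)) • (b i : (Polynomial k) ⊗[k] V))
          = c i • e i := by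
        intro i _
        rw [evalZeroMap_smul, Polynomial.coeff_C_zero]
      rw [Finset.sum_congr rfl this, hc]
    obtain ⟨y, hy⟩ := hker _ hx0
    have hyM : y ∈ M := by
      have hq : (Polynomial.X : (Polynomial k)) • (Submodule.Quotient.mk y : ((Polynomial k) ⊗[k] V) ⧸ M) = 0 := by
        rw [← Submodule.Quotient.mk_smul, ← hy, Submodule.Quotient.mk_eq_zero]
        exact x.2
      rcases htf _ _ hq with h | h
      · exact absurd h Polynomial.X_ne_zero
      · exact (Submodule.Quotient.mk_eq_zero M).mp h
    have hxy : x = (Polynomial.X : (Polynomial k)) • (⟨y, hyM⟩ : M) := by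
      apply Subtype.ext
      simpa using hy
    intro i
    have hA := congrArg (fun z => b.repr z i) hxdef
    simp only [Module.Basis.repr_sum_self] at hA
    have hB := congrArg (fun z => b.repr z i) hxy
    simp only [map_smul, Finsupp.smul_apply, smul_eq_mul] at hB
    have hAB := hA.symm.trans hB
    have := congrArg (fun p => Polynomial.coeff p 0) hAB
    simpa [Polynomial.mul_coeff_zero] using this
  -- image at zero equals span of e
  have himg : Submodule.map (evalZeroMap k V) (M.restrictScalars k)
      = Submodule.span k (Set.range e) := by
    apply le_antisymm
    · rintro _ ⟨x, hx, rfl⟩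
      have hxr : (⟨x, hx⟩ : M) = ∑ i, b.repr ⟨x, hx⟩ i • b i := (b.sum_repr ⟨x, hx⟩).symm
      have hx' : x = ∑ i, b.repr ⟨x, hx⟩ i • (b i : (Polynomial k) ⊗[k] V) := by
        have := congrArg (Submodule.subtype M) hxr
        simpa only [map_sum, map_smul, Submodule.subtype_apply] using this
      rw [hx', map_sum]
      refine Submodule.sum_mem _ fun i _ => ?_
      rw [evalZeroMap_smul]
      exact Submodule.smul_mem _ _ (Submodule.subset_span ⟨i, rfl⟩)
    · rw [Submodule.span_le]
      rintro _ ⟨i, rfl⟩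
      exact ⟨(b i : (Polynomial k) ⊗[k] V), (b i).2, rfl⟩
  have hb' : Module.finrank k (Submodule.map (evalZeroMap k V) (M.restrictScalars k)) = r := by
    rw [himg, finrank_span_eq_card hindep, Fintype.card_fin]
  -- part (c)
  let g : Fin r → RatFunc k ⊗[k] V := fun i => polyToRatFuncMap k V (b i : (Polynomial k) ⊗[k] V)
  have hpoly : ∀ p : Fin r → (Polynomial k), ∑ i, algebraMap (Polynomial k) (RatFunc k) (p i) • g i = 0 →
      ∀ i, p i = 0 := by
    intro p hp
    have h1 : polyToRatFuncMap k V (∑ i, p i • (b i : (Polynomial k) ⊗[k] V)) = 0 := by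
      rw [map_sum, Finset.sum_congr rfl fun i _ => polyToRatFuncMap_smul (p i) _]
      exact hp
    have h0 : (∑ i, p i • (b i : (Polynomial k) ⊗[k] V)) = 0 := by
      rw [← map_zero (polyToRatFuncMap k V)] at h1
      exact polyToRatFuncMap_injective h1
    have h0' : (∑ i, p i • b i : M) = 0 := by
      apply Subtype.ext
      simpa using h0
    intro i
    have h2 := congrArg (fun z => b.repr z i) h0'
    simp only [Module.Basis.repr_sum_self, map_zero] at h2
    simpa using h2
  have hgK : LinearIndependent (RatFunc k) g := by
    rw [Fintype.linearIndependent_iff]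
    intro c hc
    obtain ⟨d, hd⟩ := IsLocalization.exist_integer_multiples
      (nonZeroDivisors (Polynomial k)) Finset.univ c
    choose p hp using hd
    have hsum : ∑ i, algebraMap (Polynomial k) (RatFunc k) (p i (Finset.mem_univ i)) • g i = 0 := by
      have : ∀ i ∈ Finset.univ, algebraMap (Polynomial k) (RatFunc k) (p i (Finset.mem_univ i)) • g i
          = algebraMap (Polynomial k) (RatFunc k) (d : (Polynomial k)) • (c i • g i) := by
        intro i _
        rw [hp i (Finset.mem_univ i), Algebra.smul_def, mul_smul, algebraMap_smul]
      rw [Finset.sum_congr rfl this, ← Finset.smul_sum, hc, smul_zero]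
    have hpz := hpoly _ hsum
    intro i
    have := hp i (Finset.mem_univ i)
    rw [hpz i, map_zero, Algebra.smul_def] at this
    have hd0 : algebraMap (Polynomial k) (RatFunc k) (d : (Polynomial k)) ≠ 0 :=
      IsFractionRing.to_map_ne_zero_of_mem_nonZeroDivisors d.2
    rcases mul_eq_zero.mp this.symm with h | h
    · exact absurd h hd0
    · exact h
  have hspan : Submodule.span (RatFunc k) (polyToRatFuncMap k V '' (M : Set ((Polynomial k) ⊗[k] V)))
      = Submodule.span (RatFunc k) (Set.range g) := by
    apply le_antisymm
    · rw [Submodule.span_le]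
      rintro _ ⟨x, hx, rfl⟩
      have hxr : (⟨x, hx⟩ : M) = ∑ i, b.repr ⟨x, hx⟩ i • b i := (b.sum_repr ⟨x, hx⟩).symm
      have hx' : x = ∑ i, b.repr ⟨x, hx⟩ i • (b i : (Polynomial k) ⊗[k] V) := by
        have := congrArg (Submodule.subtype M) hxr
        simpa only [map_sum, map_smul, Submodule.subtype_apply] using this
      rw [hx', map_sum]
      refine Submodule.sum_mem _ fun i _ => ?_
      rw [polyToRatFuncMap_smul]
      exact Submodule.smul_mem _ _ (Submodule.subset_span ⟨i, rfl⟩)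
    · rw [Submodule.span_le]
      rintro _ ⟨i, rfl⟩
      exact Submodule.subset_span ⟨(b i : (Polynomial k) ⊗[k] V), (b i).2, rfl⟩
  refine ⟨Module.Free.of_basis b, Module.Finite.of_basis b, ?_, ?_⟩
  · rw [hb', hrank]
  · rw [hrank, hspan, finrank_span_eq_card hgK, Fintype.card_fin]
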